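/- Let n ≥ 1, ω ≠ 0, γ ≥ 0, μ₀ ≥ 0 with γ + μ₀ > 0, μ₁ > 0, η₁ > 0, and μⱼ > 0, ηⱼ > 0 for j = 2,…,n. Define, for complex λ ≠ 0 in a punctured neighborhood of 0, J_V(λ) = 1/μ₁ + 1/(λη₁) + Σ_{j=2}^n 1/(μⱼ + ληⱼ) and C(λ) = ω²/(γ + μ₀ + J_V(λ)⁻¹), and set C(0) = ω²/(γ + μ₀). Then C(λ) → C(0) as λ → 0 and lim_{λ→0} (C(λ) − C(0))/λ = −ω²·η₁/(γ + μ₀)², i.e. the characteristic time τ = −C′(0)/C(0) equals η₁/(γ + μ₀). -/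

import Mathlib

open Topology

/-- For the generalized Voigt rheology with prestress, the
nondimensional complex compliance `C(λ) = ω²/(γ + μ₀ + J_V(λ)⁻¹)` (for `λ ≠ 0` near `0`,
with `C(0) = ω²/(γ+μ₀)`) satisfies `C(λ) → C(0)` as `λ → 0` and
`(C(λ) − C(0))/λ → −ω²η₁/(γ+μ₀)²`, i.e. the characteristic time
`τ = −C′(0)/C(0)` equals `η₁/(γ+μ₀)`. -/
theorem stmt_19 (n : ℕ) (hn : 1 ≤ n) (ω γ μ₀ μ₁ η₁ : ℝ) (μs ηs : Fin (n - 1) → ℝ)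
    (hω : ω ≠ 0) (hγ : 0 ≤ γ) (hμ₀ : 0 ≤ μ₀) (hγμ₀ : 0 < γ + μ₀)
    (hμ₁ : 0 < μ₁) (hη₁ : 0 < η₁) (hμs : ∀ j, 0 < μs j) (hηs : ∀ j, 0 < ηs j)
    (JV C : ℂ → ℂ)
    (hJV : ∀ l : ℂ, l ≠ 0 → JV l =
      1 / (μ₁ : ℂ) + 1 / (l * (η₁ : ℂ)) + ∑ j, 1 / ((μs j : ℂ) + l * (ηs j : ℂ)))
    (hC : ∀ᶠ l in 𝓝[≠] (0 : ℂ), C l = (ω : ℂ) ^ 2 / ((γ : ℂ) + (μ₀ : ℂ) + (JV l)⁻¹))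
    (hC0 : C 0 = (ω : ℂ) ^ 2 / ((γ : ℂ) + (μ₀ : ℂ))) :
    Filter.Tendsto C (𝓝[≠] (0 : ℂ)) (𝓝 (C 0)) ∧
      Filter.Tendsto (fun l => (C l - C 0) / l) (𝓝[≠] (0 : ℂ))
        (𝓝 (-((ω : ℂ) ^ 2 * (η₁ : ℂ)) / ((γ : ℂ) + (μ₀ : ℂ)) ^ 2)) ∧
      -(-((ω : ℂ) ^ 2 * (η₁ : ℂ)) / ((γ : ℂ) + (μ₀ : ℂ)) ^ 2) / C 0
        = ((η₁ / (γ + μ₀) : ℝ) : ℂ) := by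
  set a : ℂ := (γ : ℂ) + (μ₀ : ℂ) with ha_def
  have ha : a ≠ 0 := by
    have : ((γ + μ₀ : ℝ) : ℂ) ≠ 0 := by exact_mod_cast (ne_of_gt hγμ₀)
    simpa [ha_def] using this
  clear_value a
  have hω' : (ω : ℂ) ≠ 0 := by exact_mod_cast hω
  have hη₁' : (η₁ : ℂ) ≠ 0 := by exact_mod_cast (ne_of_gt hη₁)
  -- Step 1: l * JV l → 1/η₁
  have hmul : Filter.Tendsto (fun l => l * JV l) (𝓝[≠] (0 : ℂ)) (𝓝 (1 / (η₁ : ℂ))) := by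
    have hF : Filter.Tendsto
        (fun l : ℂ => l * (1 / (μ₁ : ℂ)) + 1 / (η₁ : ℂ)
          + ∑ j, l / ((μs j : ℂ) + l * (ηs j : ℂ))) (𝓝 (0 : ℂ)) (𝓝 (1 / (η₁ : ℂ))) := by
      have h1 : Filter.Tendsto (fun l : ℂ => l * (1 / (μ₁ : ℂ))) (𝓝 0) (𝓝 0) := by
        simpa using ((continuous_id.tendsto (0 : ℂ)).mul tendsto_const_nhds :
          Filter.Tendsto (fun l : ℂ => l * (1 / (μ₁ : ℂ))) (𝓝 0) (𝓝 (0 * (1 / (μ₁ : ℂ)))))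
      have h3 : Filter.Tendsto
          (fun l : ℂ => ∑ j, l / ((μs j : ℂ) + l * (ηs j : ℂ))) (𝓝 0) (𝓝 0) := by
        have : Filter.Tendsto
            (fun l : ℂ => ∑ j, l / ((μs j : ℂ) + l * (ηs j : ℂ))) (𝓝 0)
            (𝓝 (∑ _j : Fin (n-1), (0 : ℂ))) := by
          refine tendsto_finset_sum _ fun j _ => ?_
          have hd : Filter.Tendsto (fun l : ℂ => (μs j : ℂ) + l * (ηs j : ℂ)) (𝓝 0)
              (𝓝 ((μs j : ℂ))) := by
            simpa using (tendsto_const_nhds.add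
              ((continuous_id.tendsto (0 : ℂ)).mul tendsto_const_nhds) :
              Filter.Tendsto (fun l : ℂ => (μs j : ℂ) + l * (ηs j : ℂ)) (𝓝 0)
                (𝓝 ((μs j : ℂ) + 0 * (ηs j : ℂ))))
          have hne : ((μs j : ℂ)) ≠ 0 := by exact_mod_cast (ne_of_gt (hμs j))
          convert ((continuous_id.tendsto (0 : ℂ)).div hd hne) using 2 <;> simp
        simpa using this
      have hsum := (h1.add (tendsto_const_nhds (x := (1 / (η₁ : ℂ))))).add h3
      simpa using hsum
    have heq : ∀ᶠ l in 𝓝[≠] (0 : ℂ), l * JV l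
        = l * (1 / (μ₁ : ℂ)) + 1 / (η₁ : ℂ) + ∑ j, l / ((μs j : ℂ) + l * (ηs j : ℂ)) := by
      filter_upwards [self_mem_nhdsWithin] with l hl
      have hl' : l ≠ 0 := hl
      rw [hJV l hl', mul_add, mul_add, Finset.mul_sum]
      congr 1
      · congr 1
        field_simp
      · exact Finset.sum_congr rfl fun j _ => by rw [mul_one_div]
    exact (hF.mono_left nhdsWithin_le_nhds).congr' (heq.mono fun l h => h.symm)
  have h1η : (1 / (η₁ : ℂ)) ≠ 0 := one_div_ne_zero hη₁'
  -- Step 2: (JV l)⁻¹ / l → η₁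
  have hg : Filter.Tendsto (fun l => (JV l)⁻¹ / l) (𝓝[≠] (0 : ℂ)) (𝓝 (η₁ : ℂ)) := by
    have := hmul.inv₀ h1η
    have heq : (fun l : ℂ => (l * JV l)⁻¹) = fun l => (JV l)⁻¹ / l := by
      funext l
      rw [mul_inv, div_eq_mul_inv, mul_comm]
    rw [heq] at this
    simpa using this
  -- Step 3: (JV l)⁻¹ → 0
  have hf0 : Filter.Tendsto (fun l => (JV l)⁻¹) (𝓝[≠] (0 : ℂ)) (𝓝 0) := by
    have hid : Filter.Tendsto (fun l : ℂ => l) (𝓝[≠] (0 : ℂ)) (𝓝 0) :=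
      (continuous_id.tendsto (0 : ℂ)).mono_left nhdsWithin_le_nhds
    have hlim := hid.mul hg
    have heq : ∀ᶠ l in 𝓝[≠] (0 : ℂ), l * ((JV l)⁻¹ / l) = (JV l)⁻¹ := by
      filter_upwards [self_mem_nhdsWithin] with l hl
      have hl' : l ≠ 0 := hl
      rw [mul_comm]
      exact div_mul_cancel₀ _ hl'
    simpa using hlim.congr' heq
  have hden : Filter.Tendsto (fun l => a + (JV l)⁻¹) (𝓝[≠] (0 : ℂ)) (𝓝 a) := by
    simpa using (tendsto_const_nhds.add hf0)
  have hden_ne : ∀ᶠ l in 𝓝[≠] (0 : ℂ), a + (JV l)⁻¹ ≠ 0 := hden.eventually_ne ha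
  have hCt : Filter.Tendsto C (𝓝[≠] (0 : ℂ)) (𝓝 (C 0)) := by
    have : Filter.Tendsto (fun l => (ω : ℂ) ^ 2 / (a + (JV l)⁻¹)) (𝓝[≠] (0 : ℂ))
        (𝓝 ((ω : ℂ) ^ 2 / a)) := tendsto_const_nhds.div hden ha
    rw [hC0]
    exact this.congr' (hC.mono fun l h => h.symm)
  refine ⟨hCt, ?_, ?_⟩
  · have hlim : Filter.Tendsto
        (fun l => -(ω : ℂ) ^ 2 * ((JV l)⁻¹ / l) / ((a + (JV l)⁻¹) * a)) (𝓝[≠] (0 : ℂ))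
        (𝓝 (-(ω : ℂ) ^ 2 * (η₁ : ℂ) / (a * a))) :=
      (tendsto_const_nhds.mul hg).div (hden.mul tendsto_const_nhds) (mul_ne_zero ha ha)
    have heq : ∀ᶠ l in 𝓝[≠] (0 : ℂ), (C l - C 0) / l
        = -(ω : ℂ) ^ 2 * ((JV l)⁻¹ / l) / ((a + (JV l)⁻¹) * a) := by
      filter_upwards [hC, hden_ne, self_mem_nhdsWithin] with l h hne hl
      have hl' : l ≠ 0 := hl
      rw [h, hC0]
      generalize (JV l)⁻¹ = f at hne ⊢
      field_simp
      ring
    have hval : (-(ω : ℂ) ^ 2 * (η₁ : ℂ) / (a * a))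
        = -((ω : ℂ) ^ 2 * (η₁ : ℂ)) / a ^ 2 := by ring
    rw [← hval]
    exact hlim.congr' (heq.mono fun l h => h.symm)
  · rw [hC0]
    push_cast
    rw [← ha_def]
    field_simp
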